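/- Let (X, ≤, τ) be a compact partially ordered topological space and let P be a closed subgroup of H₊(X), the group of all order-preserving homeomorphisms of X with the compact-open topology τ_co. Then τ_co restricted to P is minimal within the class of π-uniform topologies on P; that is, every Hausdorff group topology σ on P which is coarser than τ_co and for which the natural evaluation action (P, σ) × X → X is π-uniform (with respect to the unique compatible uniformity on X) coincides with τ_co. -/

import Mathlib

open scoped Topology

/-- The group of self-homeomorphisms of `X`, with composition as multiplication:
`(f * g) x = f (g x)`, identity `Homeomorph.refl` and inverse `Homeomorph.symm`. -/
instance homeoGroup (X : Type*) [TopologicalSpace X] : Group (X ≃ₜ X) where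
  mul f g := g.trans f
  one := Homeomorph.refl X
  inv := Homeomorph.symm
  mul_assoc f g h := rfl
  one_mul f := rfl
  mul_one f := rfl
  inv_mul_cancel f := by ext x; exact f.symm_apply_apply x

/-- The compact-open topology on the homeomorphism group `H(X)`, induced from the
compact-open topology on `C(X, X)`. -/
def coTop (X : Type*) [TopologicalSpace X] : TopologicalSpace (X ≃ₜ X) :=
  TopologicalSpace.induced (fun f : X ≃ₜ X => (f : C(X, X))) ContinuousMap.compactOpen

/-- The unique uniformity compatible with the topology of a compact Hausdorff space. -/
def cptUnif (X : Type*) [TopologicalSpace X] [CompactSpace X] [T2Space X] :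
    Filter (X × X) :=
  @uniformity X uniformSpaceOfCompactR1

/-- An action `act` of a group `G` equipped with a topology `σ` on a set `X` equipped with a
uniformity (filter) `𝔅` is *π-uniform* if for every `g₀ ∈ G` and every entourage `ε ∈ 𝔅`
there exist an entourage `δ ∈ 𝔅` and a neighborhood `U` of `g₀` such that
`(g • x, g • y) ∈ ε` whenever `(x, y) ∈ δ` and `g ∈ U`. -/
def IsPiUniform {G X : Type*} (σ : TopologicalSpace G) (𝔅 : Filter (X × X))
    (act : G → X → X) : Prop :=
  ∀ g₀ : G, ∀ ε ∈ 𝔅, ∃ δ ∈ 𝔅, ∃ U ∈ @nhds G σ g₀,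
    ∀ g ∈ U, ∀ x y : X, (x, y) ∈ δ → (act g x, act g y) ∈ ε

/-- The group `H₊(X)` of all order-preserving homeomorphisms (order-automorphisms) of an
ordered topological space `X`, as a subgroup of the homeomorphism group `H(X)`. -/
def Hplus (X : Type*) [TopologicalSpace X] [PartialOrder X] : Subgroup (X ≃ₜ X) where
  carrier := {f : X ≃ₜ X | ∀ x y : X, x ≤ y ↔ f x ≤ f y}
  one_mem' := fun _ _ => Iff.rfl
  mul_mem' := by
    intro a b ha hb x y
    exact (hb x y).trans (ha (b x) (b y))
  inv_mem' := by
    intro a ha x y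
    have := ha (a.symm x) (a.symm y)
    simpa using this.symm

open scoped SetRel in
open Filter Topology Uniformity UniformSpace Set in
/-- A closed symmetric entourage whose triple composition is inside a given entourage. -/
lemma exists_closed_symm_triple {Y : Type*} [UniformSpace Y] {ε : Set (Y × Y)} (hε : ε ∈ 𝓤 Y) :
    ∃ s ∈ 𝓤 Y, IsClosed s ∧ SetRel.IsSymm s ∧ s ○ (s ○ s) ⊆ ε := by
  obtain ⟨t, ht, htsym, ht2⟩ := comp_symm_mem_uniformity_sets hε
  obtain ⟨u, hu, husym, hu2⟩ := comp_symm_mem_uniformity_sets ht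
  obtain ⟨c, ⟨hc, hccl⟩, hcu⟩ := uniformity_hasBasis_closed.mem_iff.mp hu
  refine ⟨SetRel.symmetrize c, symmetrize_mem_uniformity hc,
    hccl.inter (hccl.preimage continuous_swap), inferInstance, ?_⟩
  have hsu : SetRel.symmetrize c ⊆ u := SetRel.symmetrize_subset_self.trans hcu
  have hut : u ⊆ t := by have := isRefl_of_mem_uniformity hu; exact SetRel.left_subset_comp.trans hu2
  calc SetRel.symmetrize c ○ (SetRel.symmetrize c ○ SetRel.symmetrize c)
      ⊆ u ○ (u ○ u) := SetRel.comp_subset_comp hsu (SetRel.comp_subset_comp hsu hsu)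
    _ ⊆ u ○ t := SetRel.comp_subset_comp subset_rfl hu2
    _ ⊆ t ○ t := SetRel.comp_subset_comp hut subset_rfl
    _ ⊆ ε := ht2

open Filter Topology Uniformity UniformSpace Set in
/-- Pointwise convergence along an ultrafilter together with eventual equicontinuity
implies uniform convergence, on a compact uniform space. -/
lemma piUnif_tendstoUniformly {ι Y : Type*} [UniformSpace Y] [CompactSpace Y]
    (G : Ultrafilter ι) (F : ι → Y → Y) (h : Y → Y)
    (hpt : ∀ x : Y, Tendsto (fun i => F i x) (G : Filter ι) (𝓝 (h x)))
    (heq : ∀ ε ∈ 𝓤 Y, ∃ δ ∈ 𝓤 Y, ∀ᶠ i in (G : Filter ι),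
      ∀ x y : Y, (x, y) ∈ δ → (F i x, F i y) ∈ ε) :
    TendstoUniformly F h (G : Filter ι) := by
  intro ε hε
  obtain ⟨s, hs, hscl, hssym, hsε⟩ := exists_closed_symm_triple hε
  obtain ⟨δ, hδ, hUδ⟩ := heq s hs
  obtain ⟨δ', ⟨hδ'mem, hδ'open⟩, hδ'sub⟩ := uniformity_hasBasis_open.mem_iff.mp hδ
  have hcover : (univ : Set Y) ⊆ ⋃ x : Y, ball x δ' := fun x _ =>
    mem_iUnion.2 ⟨x, refl_mem_uniformity hδ'mem⟩
  obtain ⟨t, ht⟩ := isCompact_univ.elim_finite_subcover (fun x : Y => ball x δ')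
    (fun x => isOpen_ball x hδ'open) hcover
  have key : ∀ j x : Y, (j, x) ∈ δ → (h j, h x) ∈ s := by
    intro j x hjx
    have hten : Tendsto (fun i => (F i j, F i x)) (G : Filter ι) (𝓝 (h j, h x)) :=
      (hpt j).prodMk_nhds (hpt x)
    exact hscl.mem_of_tendsto hten (hUδ.mono fun i hi => hi j x hjx)
  have hptev : ∀ᶠ i in (G : Filter ι), ∀ j ∈ t, (h j, F i j) ∈ s := by
    rw [eventually_all_finset]
    intro j _
    exact (hpt j) (UniformSpace.ball_mem_nhds (h j) hs)
  filter_upwards [hptev, hUδ] with i h1 h2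
  intro x
  have hx : x ∈ ⋃ j ∈ t, ball j δ' := ht (mem_univ x)
  obtain ⟨j, hjt, hjx⟩ := mem_iUnion₂.mp hx
  have hjx' : (j, x) ∈ δ := hδ'sub hjx
  have c1 : (h x, h j) ∈ s := hssym.symm _ _ (key j x hjx')
  have c2 : (h j, F i j) ∈ s := h1 j hjt
  have c3 : (F i j, F i x) ∈ s := h2 j x hjx'
  exact hsε ⟨h j, c1, F i j, c2, c3⟩

open Filter Topology Uniformity UniformSpace Set in
lemma piUnif_tendsto_comp {ι Y : Type*} [UniformSpace Y] [CompactSpace Y]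
    (G : Ultrafilter ι) (F : ι → Y → Y) (h : Y → Y)
    (hpt : ∀ x : Y, Tendsto (fun i => F i x) (G : Filter ι) (𝓝 (h x)))
    (heq : ∀ ε ∈ 𝓤 Y, ∃ δ ∈ 𝓤 Y, ∀ᶠ i in (G : Filter ι),
      ∀ x y : Y, (x, y) ∈ δ → (F i x, F i y) ∈ ε)
    (c : ι → Y) (z : Y) (hc : Tendsto c (G : Filter ι) (𝓝 z)) :
    Tendsto (fun i => F i (c i)) (G : Filter ι) (𝓝 (h z)) := by
  have hTU := piUnif_tendstoUniformly G F h hpt heq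
  rw [Uniform.tendsto_nhds_right]
  rw [Filter.tendsto_def]
  intro ε hε
  obtain ⟨s, hs, hscomp⟩ := comp_mem_uniformity_sets hε
  obtain ⟨δ, hδ, hUδ⟩ := heq s hs
  have h1 : ∀ᶠ i in (G : Filter ι), (h z, F i z) ∈ s := (hTU s hs).mono fun i hi => hi z
  have h2 : ∀ᶠ i in (G : Filter ι), (z, c i) ∈ δ := hc (UniformSpace.ball_mem_nhds z hδ)
  filter_upwards [h1, h2, hUδ] with i a b d
  exact hscomp ⟨F i z, a, d z (c i) b⟩

open Filter Topology Uniformity UniformSpace Set in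
/-- Let `X` be a compact partially ordered topological space (the graph of
the order is closed) and let `P` be a closed subgroup of `H₊(X)`.  Then the compact-open
topology on `P` is minimal within the class of π-uniform topologies on `P`: every coarser
Hausdorff group topology `σ` on `P` for which the evaluation action of `(P, σ)` on `X` is
π-uniform (with respect to the unique compatible uniformity on `X`) coincides with the
compact-open topology. -/
theorem compactOpen_minimal_piUniform_orderHomeos {X : Type*}
    [TopologicalSpace X] [CompactSpace X] [T2Space X]
    [PartialOrder X] [OrderClosedTopology X]
    (P : Subgroup (X ≃ₜ X)) (hPle : P ≤ Hplus X)
    (hPclosed : IsClosed[coTop X] (P : Set (X ≃ₜ X)))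
    (σ : TopologicalSpace ↥P)
    (hσgrp : @IsTopologicalGroup ↥P σ _) (hσT2 : @T2Space ↥P σ)
    (hcoarse : TopologicalSpace.induced (Subtype.val : ↥P → X ≃ₜ X) (coTop X) ≤ σ)
    (hπ : IsPiUniform σ (cptUnif X) (fun (p : ↥P) (x : X) => (p : X ≃ₜ X) x)) :
    σ = TopologicalSpace.induced (Subtype.val : ↥P → X ≃ₜ X) (coTop X) := by
  classical
  letI u : UniformSpace X := uniformSpaceOfCompactR1
  letI : TopologicalSpace (X ≃ₜ X) := coTop X
  refine le_antisymm ?_ hcoarse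
  rw [le_iff_nhds]
  intro p₀
  rw [Filter.le_iff_ultrafilter]
  intro G hG
  set F : ↥P → X → X := fun p x => (p : X ≃ₜ X) x with hF
  set Fi : ↥P → X → X := fun p x => (p : X ≃ₜ X).symm x with hFi
  have hGnhds : (G : Filter ↥P) ≤ @nhds _ σ p₀ := hG
  -- equicontinuity of the net `F`
  have heqF : ∀ ε ∈ 𝓤 X, ∃ δ ∈ 𝓤 X, ∀ᶠ p in (G : Filter ↥P),
      ∀ x y : X, (x, y) ∈ δ → (F p x, F p y) ∈ ε := by
    intro ε hε
    obtain ⟨δ, hδ, U, hU, hcond⟩ := hπ p₀ ε hε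
    refine ⟨δ, hδ, ?_⟩
    filter_upwards [hGnhds hU] with p hp
    exact fun x y hxy => hcond p hp x y hxy
  -- equicontinuity of the net of inverses `Fi`
  have hinvcont : Filter.Tendsto (fun p : ↥P => p⁻¹) (@nhds _ σ p₀) (@nhds _ σ p₀⁻¹) :=
    (@continuous_inv ↥P σ _ hσgrp.toContinuousInv).tendsto p₀
  have heqFi : ∀ ε ∈ 𝓤 X, ∃ δ ∈ 𝓤 X, ∀ᶠ p in (G : Filter ↥P),
      ∀ x y : X, (x, y) ∈ δ → (Fi p x, Fi p y) ∈ ε := by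
    intro ε hε
    obtain ⟨δ, hδ, U, hU, hcond⟩ := hπ p₀⁻¹ ε hε
    refine ⟨δ, hδ, ?_⟩
    have hev : ∀ᶠ p in (G : Filter ↥P), p⁻¹ ∈ U :=
      (hinvcont.mono_left hGnhds) hU
    filter_upwards [hev] with p hp
    exact fun x y hxy => hcond p⁻¹ hp x y hxy
  -- pointwise ultrafilter limits
  have hex : ∀ x : X, ∃ z : X, Filter.Tendsto (fun p => F p x) (G : Filter ↥P) (𝓝 z) := by
    intro x
    obtain ⟨z, -, hz⟩ := isCompact_univ.ultrafilter_le_nhds (G.map fun p => F p x)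
      (by simp)
    exact ⟨z, hz⟩
  choose h hh using hex
  have hexi : ∀ x : X, ∃ z : X, Filter.Tendsto (fun p => Fi p x) (G : Filter ↥P) (𝓝 z) := by
    intro x
    obtain ⟨z, -, hz⟩ := isCompact_univ.ultrafilter_le_nhds (G.map fun p => Fi p x)
      (by simp)
    exact ⟨z, hz⟩
  choose k hk using hexi
  -- uniform convergence
  have hTU : TendstoUniformly F h (G : Filter ↥P) := piUnif_tendstoUniformly G F h hh heqF
  have hTUi : TendstoUniformly Fi k (G : Filter ↥P) := piUnif_tendstoUniformly G Fi k hk heqFi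
  have hcont : Continuous h :=
    hTU.continuous (Filter.Eventually.frequently (Filter.Eventually.of_forall fun p => (p : X ≃ₜ X).continuous))
  have hconti : Continuous k :=
    hTUi.continuous (Filter.Eventually.frequently (Filter.Eventually.of_forall fun p => (p : X ≃ₜ X).symm.continuous))
  -- h and k are mutually inverse
  have hki : ∀ x, h (k x) = x := by
    intro x
    have h1 : Filter.Tendsto (fun p => F p (Fi p x)) (G : Filter ↥P) (𝓝 (h (k x))) :=
      piUnif_tendsto_comp G F h hh heqF (fun p => Fi p x) (k x) (hk x)
    have h2 : (fun p : ↥P => F p (Fi p x)) = fun _ => x :=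
      funext fun p => (p : X ≃ₜ X).apply_symm_apply x
    rw [h2] at h1
    exact tendsto_nhds_unique h1 tendsto_const_nhds
  have hik : ∀ x, k (h x) = x := by
    intro x
    have h1 : Filter.Tendsto (fun p => Fi p (F p x)) (G : Filter ↥P) (𝓝 (k (h x))) :=
      piUnif_tendsto_comp G Fi k hk heqFi (fun p => F p x) (h x) (hh x)
    have h2 : (fun p : ↥P => Fi p (F p x)) = fun _ => x :=
      funext fun p => (p : X ≃ₜ X).symm_apply_apply x
    rw [h2] at h1
    exact tendsto_nhds_unique h1 tendsto_const_nhds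
  -- the limit homeomorphism
  let H : X ≃ₜ X :=
    { toFun := h
      invFun := k
      left_inv := hik
      right_inv := hki
      continuous_toFun := hcont
      continuous_invFun := hconti }
  -- convergence to `H` in the compact-open topology
  have hco : Filter.Tendsto (fun p : ↥P => ((p : X ≃ₜ X) : C(X, X))) (G : Filter ↥P)
      (𝓝 (H : C(X, X))) := by
    rw [ContinuousMap.tendsto_iff_tendstoUniformly]
    exact hTU
  have hcoH : Filter.Tendsto (fun p : ↥P => (p : X ≃ₜ X)) (G : Filter ↥P) (𝓝 H) := by
    rw [show (coTop X : TopologicalSpace (X ≃ₜ X)) =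
      TopologicalSpace.induced (fun f : X ≃ₜ X => (f : C(X, X))) ContinuousMap.compactOpen
      from rfl] at *
    rw [show (𝓝 H : Filter (X ≃ₜ X)) = Filter.comap (fun f : X ≃ₜ X => (f : C(X, X))) (𝓝 (H : C(X, X))) from nhds_induced _ _]
    exact Filter.tendsto_comap_iff.mpr hco
  have hHP : H ∈ P :=
    hPclosed.mem_of_tendsto hcoH (Filter.Eventually.of_forall fun p => p.2)
  -- identify the limit with p₀ using Hausdorffness of σ
  have hindH : (G : Filter ↥P) ≤
      @nhds _ (TopologicalSpace.induced (Subtype.val : ↥P → X ≃ₜ X) (coTop X)) ⟨H, hHP⟩ := by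
    rw [nhds_induced]
    exact Filter.map_le_iff_le_comap.mp hcoH
  have hσH : (G : Filter ↥P) ≤ @nhds _ σ ⟨H, hHP⟩ := hindH.trans (nhds_mono hcoarse)
  have heqp : (⟨H, hHP⟩ : ↥P) = p₀ := by
    refine @tendsto_nhds_unique ↥P ↥P σ hσT2 id (G : Filter ↥P) ⟨H, hHP⟩ p₀ G.neBot ?_ ?_
    · exact Filter.tendsto_id'.mpr hσH
    · exact Filter.tendsto_id'.mpr hGnhds
  exact heqp ▸ hindH
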